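/- If w is a boolean permutation whose smallest support element a satisfies that a+1 is not in the support of w, and w' is defined by w = s_a w', then the second row of P(w) equals the second row of P(w') together with the element a+1. -/

import Mathlib

/-- The simple transposition `s_i` in `S_n`, swapping positions `i` and `i+1`
(1-indexed, so valid for `1 ≤ i ≤ n-1`); otherwise the identity. -/
def simpleT (n : ℕ) (i : ℕ) : Equiv.Perm (Fin n) :=
  if h : 1 ≤ i ∧ i < n then Equiv.swap ⟨i - 1, by omega⟩ ⟨i, h.2⟩ else 1

/-- `l` is a word in the simple transpositions `s_1, …, s_{n-1}` with product `w`. -/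
def IsWord (n : ℕ) (w : Equiv.Perm (Fin n)) (l : List ℕ) : Prop :=
  (∀ i ∈ l, 1 ≤ i ∧ i < n) ∧ (l.map (simpleT n)).prod = w

/-- The Coxeter length of `w`. -/
noncomputable def coxLength (n : ℕ) (w : Equiv.Perm (Fin n)) : ℕ :=
  sInf {k | ∃ l, IsWord n w l ∧ l.length = k}

/-- A reduced word for `w`: a word of minimal length. -/
def IsReducedWord (n : ℕ) (w : Equiv.Perm (Fin n)) (l : List ℕ) : Prop :=
  IsWord n w l ∧ l.length = coxLength n w

/-- A run: a nonempty word of consecutive integers, increasing or decreasing. -/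
def IsRun (r : List ℕ) : Prop :=
  r ≠ [] ∧ (List.Chain' (fun a b => b = a + 1) r ∨ List.Chain' (fun a b => a = b + 1) r)

/-- `run(w)`: the minimum number of runs whose concatenation is a reduced word of `w`. -/
noncomputable def runStat (n : ℕ) (w : Equiv.Perm (Fin n)) : ℕ :=
  sInf {k | ∃ rs : List (List ℕ), rs.length = k ∧ (∀ r ∈ rs, IsRun r) ∧
    IsReducedWord n w rs.flatten}

/-- One-line notation of `w`, with entries `1, …, n`. -/
def oneLine {n : ℕ} (w : Equiv.Perm (Fin n)) : List ℕ :=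
  List.ofFn (fun i => (w i : ℕ) + 1)

/-- Length of a longest increasing subsequence of the one-line notation of `w`. -/
noncomputable def lisLen {n : ℕ} (w : Equiv.Perm (Fin n)) : ℕ :=
  sSup {k | ∃ l : List ℕ, l.Sublist (oneLine w) ∧ l.Pairwise (· < ·) ∧ l.length = k}

/-- Schensted row insertion: insert `x` into row `r`, possibly bumping an entry. -/
def rowInsert (r : List ℕ) (x : ℕ) : List ℕ × Option ℕ :=
  match r.findIdx? (fun y => decide (x < y)) with
  | none => (r ++ [x], none)
  | some i => (r.set i x, r[i]?)

/-- Schensted insertion of `x` into a tableau (list of rows). -/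
def bumpInsert : List (List ℕ) → ℕ → List (List ℕ)
  | [], x => [[x]]
  | r :: rest, x =>
    match rowInsert r x with
    | (r', none) => r' :: rest
    | (r', some y) => r' :: bumpInsert rest y

/-- The RSK insertion tableau of a word. -/
def Ptab (w : List ℕ) : List (List ℕ) := w.foldl bumpInsert []

/-- The index of the row where the new box appeared, going from `p` to `p'`. -/
def recRow (p p' : List (List ℕ)) : ℕ :=
  (List.range p'.length).findIdx
    (fun j => decide ((p.getD j []).length < (p'.getD j []).length))

/-- Add entry `v` at the end of row `j` of `q`. -/
def addAt (q : List (List ℕ)) (j v : ℕ) : List (List ℕ) :=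
  if j < q.length then q.set j ((q.getD j []) ++ [v]) else q ++ [[v]]

/-- The RSK recording tableau of a word. -/
def Qtab (w : List ℕ) : List (List ℕ) :=
  ((w.zipIdx.map Prod.swap).foldl (fun pq ix =>
    let p' := bumpInsert pq.1 ix.2
    (p', addAt pq.2 (recRow pq.1 p') (ix.1 + 1))) (([], []) : List (List ℕ) × List (List ℕ))).2

/-- The second row of a tableau. -/
def Row2 (t : List (List ℕ)) : List ℕ := t.getD 1 []

/-- A set `L` of integers is uncrowded if every interval `[y, y+2x]` contains
at most `x+1` elements of `L`. -/
def Uncrowded (L : Set ℤ) : Prop :=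
  ∀ (y : ℤ) (x : ℕ), 0 < x → ({z : ℤ | y ≤ z ∧ z ≤ y + 2 * (x : ℤ)} ∩ L).ncard ≤ x + 1

/-- `w` is boolean: some reduced word of `w` has all distinct letters. -/
def BooleanPerm (n : ℕ) (w : Equiv.Perm (Fin n)) : Prop :=
  ∃ l, IsReducedWord n w l ∧ l.Nodup

/-- `w` avoids the pattern `321`. -/
def Avoids321 {n : ℕ} (w : Equiv.Perm (Fin n)) : Prop :=
  ¬ ∃ i j k : Fin n, i < j ∧ j < k ∧ w k < w j ∧ w j < w i

/-- `w` avoids the pattern `3412`. -/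
def Avoids3412 {n : ℕ} (w : Equiv.Perm (Fin n)) : Prop :=
  ¬ ∃ i j k l : Fin n, i < j ∧ j < k ∧ k < l ∧ w k < w l ∧ w l < w i ∧ w i < w j

/-- The support of `w`: the letters appearing in reduced words of `w`. -/
def Supp (n : ℕ) (w : Equiv.Perm (Fin n)) : Set ℕ :=
  {i | ∃ l, IsReducedWord n w l ∧ i ∈ l}

/-- The entries of a row, as a set of integers. -/
def entrySet (r : List ℕ) : Set ℤ := {z | ∃ x ∈ r, (x : ℤ) = z}

/-- `(r1, r2)` are the rows of a standard Young tableau of size `n` with at most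
two rows (entries `1, …, n`). -/
def IsSYT2 (n : ℕ) (r1 r2 : List ℕ) : Prop :=
  r1.Pairwise (· < ·) ∧ r2.Pairwise (· < ·) ∧ r2.length ≤ r1.length ∧
  (∀ i < r2.length, r1.getD i 0 < r2.getD i 0) ∧
  (r1 ++ r2).Perm (List.range' 1 n)

/-- The tableau (list of nonempty rows) with rows `r1`, `r2`. -/
def tab2 (r1 r2 : List ℕ) : List (List ℕ) :=
  if r2 = [] then (if r1 = [] then [] else [r1]) else [r1, r2]

/-- Every maximal block of `1`s (`true`s) in the binary word has odd length. -/
def OddBlocks (l : List Bool) : Prop :=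
  ∀ l₁ l₂ l₃ : List Bool, l = l₁ ++ l₂ ++ l₃ → l₂ ≠ [] → (∀ b ∈ l₂, b = true) →
    l₁.getLast? ≠ some true → l₃.head? ≠ some true → Odd l₂.length

lemma rowInsert_of_forall {r : List ℕ} {x : ℕ} (h : ∀ y ∈ r, ¬ x < y) :
    rowInsert r x = (r ++ [x], none) := by
  unfold rowInsert
  rw [List.findIdx?_eq_none_iff.mpr (by intro y hy; simpa using h y hy)]

def cons2 (a : ℕ) : List (List ℕ) → List (List ℕ)
  | [] => [[a+1]]
  | r :: rs => ((a+1) :: r) :: rs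

lemma bump_cons2 (a : ℕ) (rs : List (List ℕ)) (y : ℕ) (hy : a + 1 ≤ y) :
    bumpInsert (cons2 a rs) y = cons2 a (bumpInsert rs y) := by
  have hpa : (decide (y < a+1)) = false := by simp; omega
  cases rs with
  | nil =>
    have h1 : rowInsert [a+1] y = ([a+1, y], none) :=
      rowInsert_of_forall (by intro z hz; simp at hz; omega)
    show bumpInsert ([a+1] :: []) y = cons2 a (bumpInsert [] y)
    simp only [bumpInsert, h1, cons2]
  | cons r rs =>
    show bumpInsert (((a+1) :: r) :: rs) y = cons2 a (bumpInsert (r :: rs) y)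
    rcases h : List.findIdx? (fun z => decide (y < z)) r with _ | i
    · have h1 : rowInsert r y = (r ++ [y], none) := by
        unfold rowInsert; rw [h]
      have h2 : rowInsert ((a+1) :: r) y = (((a+1) :: r) ++ [y], none) := by
        unfold rowInsert
        rw [List.findIdx?_cons]
        simp only [hpa, Bool.false_eq_true, if_false, h, Option.map_none]
      simp only [bumpInsert, h1, h2, cons2, List.cons_append]
    · have hi := List.findIdx?_eq_some_iff_getElem.mp h
      obtain ⟨hilen, -, -⟩ := hi
      have h1 : rowInsert r y = (r.set i y, some r[i]) := by
        unfold rowInsert; rw [h]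
        simp [List.getElem?_eq_getElem hilen]
      have h2 : rowInsert ((a+1) :: r) y = ((a+1) :: r.set i y, some r[i]) := by
        unfold rowInsert
        rw [List.findIdx?_cons]
        simp only [hpa, Bool.false_eq_true, if_false, h, Option.map_some]
        simp [List.getElem?_eq_getElem hilen]
      simp only [bumpInsert, h1, h2, cons2]

def Rel2 (a : ℕ) (T T' : List (List ℕ)) : Prop :=
  ∃ s rest, (∀ z ∈ s, a + 2 ≤ z) ∧
    T' = (List.range' 1 (a+1) ++ s) :: rest ∧
    T = (List.range' 1 a ++ s) :: cons2 a rest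

lemma findIdx?_pre_append {m x : ℕ} (s : List ℕ) (hx : m + 1 ≤ x) :
    List.findIdx? (fun z => decide (x < z)) (List.range' 1 m ++ s) =
      (List.findIdx? (fun z => decide (x < z)) s).map (fun i => i + m) := by
  rw [List.findIdx?_append]
  have h1 : List.findIdx? (fun z => decide (x < z)) (List.range' 1 m) = none := by
    rw [List.findIdx?_eq_none_iff]
    intro z hz
    rw [List.mem_range'_1] at hz
    simp; omega
  rw [h1]
  simp [Option.none_or]

lemma Rel2_bump {a : ℕ} {T T' : List (List ℕ)} (h : Rel2 a T T') {x : ℕ} (hx : a + 2 ≤ x) :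
    Rel2 a (bumpInsert T x) (bumpInsert T' x) := by
  obtain ⟨s, rest, hs, hT', hT⟩ := h
  subst hT' hT
  have e1 := findIdx?_pre_append (m := a) (x := x) s (by omega)
  have e2 := findIdx?_pre_append (m := a+1) (x := x) s (by omega)
  rcases hf : List.findIdx? (fun z => decide (x < z)) s with _ | j
  · rw [hf] at e1 e2
    have h1 : rowInsert (List.range' 1 a ++ s) x = ((List.range' 1 a ++ s) ++ [x], none) := by
      unfold rowInsert; rw [e1]; rfl
    have h2 : rowInsert (List.range' 1 (a+1) ++ s) x
        = ((List.range' 1 (a+1) ++ s) ++ [x], none) := by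
      unfold rowInsert; rw [e2]; rfl
    refine ⟨s ++ [x], rest, ?_, ?_, ?_⟩
    · intro z hz; rcases List.mem_append.mp hz with hz | hz
      · exact hs z hz
      · simp at hz; omega
    · simp only [bumpInsert, h2]; simp
    · simp only [bumpInsert, h1]; simp
  · rw [hf] at e1 e2
    obtain ⟨hjlen, -, -⟩ := List.findIdx?_eq_some_iff_getElem.mp hf
    have hsetlen : ∀ m : ℕ, (List.range' 1 m).length = m := by simp
    have h1 : rowInsert (List.range' 1 a ++ s) x
        = (List.range' 1 a ++ s.set j x, some s[j]) := by
      unfold rowInsert; rw [e1]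
      show ((List.range' 1 a ++ s).set (j + a) x, (List.range' 1 a ++ s)[j + a]?) = _
      congr 1
      · rw [List.set_append]
        simp
      · rw [List.getElem?_append_right (by simp)]
        simp [List.getElem?_eq_getElem hjlen]
    have h2 : rowInsert (List.range' 1 (a+1) ++ s) x
        = (List.range' 1 (a+1) ++ s.set j x, some s[j]) := by
      unfold rowInsert; rw [e2]
      show ((List.range' 1 (a+1) ++ s).set (j + (a+1)) x,
        (List.range' 1 (a+1) ++ s)[j + (a+1)]?) = _
      congr 1
      · rw [List.set_append]
        simp
        intro h; omega
      · rw [List.getElem?_append_right (by simp)]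
        simp [List.getElem?_eq_getElem hjlen]
    have hsj : a + 2 ≤ s[j] := hs _ (List.getElem_mem hjlen)
    refine ⟨s.set j x, bumpInsert rest s[j], ?_, ?_, ?_⟩
    · intro z hz
      rcases List.mem_or_eq_of_mem_set hz with hz | rfl
      · exact hs z hz
      · exact hx
    · simp only [bumpInsert, h2]
    · simp only [bumpInsert, h1]
      rw [bump_cons2 a rest s[j] (by omega)]

lemma Rel2_fold {a : ℕ} (t : List ℕ) (ht : ∀ z ∈ t, a + 2 ≤ z) :
    ∀ {T T' : List (List ℕ)}, Rel2 a T T' →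
    Rel2 a (List.foldl bumpInsert T t) (List.foldl bumpInsert T' t) := by
  induction t with
  | nil => intro T T' h; simpa using h
  | cons x t ih =>
    intro T T' h
    simp only [List.foldl_cons]
    exact ih (fun z hz => ht z (List.mem_cons_of_mem _ hz))
      (Rel2_bump h (ht x (List.mem_cons_self)))

lemma foldl_sorted : ∀ (l r : List ℕ) (rest : List (List ℕ)),
    (∀ x ∈ l, ∀ y ∈ r, y < x) → l.Pairwise (· < ·) →
    List.foldl bumpInsert (r :: rest) l = (r ++ l) :: rest := by
  intro l
  induction l with
  | nil => simp
  | cons x l ih =>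
    intro r rest h hs
    rw [List.pairwise_cons] at hs
    have h1 : rowInsert r x = (r ++ [x], none) :=
      rowInsert_of_forall (fun y hy => not_lt.mpr (le_of_lt (h x (List.mem_cons_self) y hy)))
    have h2 : bumpInsert (r :: rest) x = (r ++ [x]) :: rest := by
      simp only [bumpInsert, h1]
    rw [List.foldl_cons, h2, ih (r ++ [x]) rest ?_ hs.2]
    · simp
    · intro z hz y hy
      rcases List.mem_append.mp hy with hy | hy
      · exact h z (List.mem_cons_of_mem _ hz) y hy
      · simp at hy; subst hy; exact hs.1 z hz

lemma Ptab_sorted {l : List ℕ} (h : l.Pairwise (· < ·)) (hne : l ≠ []) : Ptab l = [l] := by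
  cases l with
  | nil => simp at hne
  | cons x l =>
    rw [List.pairwise_cons] at h
    unfold Ptab
    rw [List.foldl_cons]
    have h0 : bumpInsert [] x = [[x]] := rfl
    rw [h0, foldl_sorted l [x] [] ?_ h.2]
    · simp
    · intro z hz y hy; simp at hy; subst hy; exact h.1 z hz

lemma Ptab_w_prefix {a : ℕ} (ha : 1 ≤ a) :
    Ptab (List.range' 1 (a-1) ++ [a+1, a]) = [List.range' 1 a, [a+1]] := by
  have e1 : List.range' 1 (a-1) ++ [a+1, a] = (List.range' 1 (a-1) ++ [a+1]) ++ [a] := by simp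
  have hsort : (List.range' 1 (a-1) ++ [a+1]).Pairwise (· < ·) := by
    rw [List.pairwise_append]
    refine ⟨List.pairwise_lt_range' (s := 1) (n := a-1), by simp, ?_⟩
    intro z hz y hy
    rw [List.mem_range'_1] at hz
    simp at hy; subst hy; omega
  rw [e1, Ptab, List.foldl_append]
  rw [show List.foldl bumpInsert [] (List.range' 1 (a-1) ++ [a+1])
      = Ptab (List.range' 1 (a-1) ++ [a+1]) from rfl,
    Ptab_sorted hsort (by simp)]
  simp only [List.foldl_cons, List.foldl_nil]
  have hf : List.findIdx? (fun z => decide (a < z)) (List.range' 1 (a-1) ++ [a+1])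
      = some (a-1) := by
    rw [findIdx?_pre_append _ (by omega)]
    rw [List.findIdx?_cons]
    simp only [show decide (a < a+1) = true by simp, if_true, List.findIdx?_nil,
      Option.map_some]
    simp
  have h1 : rowInsert (List.range' 1 (a-1) ++ [a+1]) a = (List.range' 1 a, some (a+1)) := by
    unfold rowInsert; rw [hf]
    show ((List.range' 1 (a-1) ++ [a+1]).set (a-1) a,
      (List.range' 1 (a-1) ++ [a+1])[a-1]?) = _
    congr 1
    · rw [List.set_append]
      simp only [List.length_range', lt_irrefl, if_false]
      rw [show (a:ℕ) - 1 - (a - 1) = 0 by omega]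
      have : List.range' 1 a = List.range' 1 (a-1) ++ [a] := by
        have := List.range'_concat (step := 1) (s := 1) (n := a-1)
        rw [show a - 1 + 1 = a by omega] at this
        rw [this]
        congr 2
        omega
      rw [this]
      rfl
    · rw [List.getElem?_append_right (by simp)]
      simp
  simp only [bumpInsert, h1]

-- AUX2 START
lemma simpleT_fix {n i : ℕ} (p : Fin n) (h : (p : ℕ) + 1 < i) : simpleT n i p = p := by
  unfold simpleT
  split_ifs with h1
  · rw [Equiv.swap_apply_of_ne_of_ne]
    · exact Fin.ne_of_val_ne (by simp; omega)
    · exact Fin.ne_of_val_ne (by simp; omega)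
  · rfl

lemma simpleT_comm {n a i : ℕ} (h : a + 2 ≤ i) :
    Commute (simpleT n a) (simpleT n i) := by
  unfold simpleT
  split_ifs with h1 h2 h2
  · apply Equiv.Perm.Disjoint.commute
    intro x
    by_cases hx : (x : ℕ) ≤ a
    · right
      exact Equiv.swap_apply_of_ne_of_ne
        (Fin.ne_of_val_ne (by simp only [Fin.val_mk]; omega))
        (Fin.ne_of_val_ne (by simp only [Fin.val_mk]; omega))
    · left
      exact Equiv.swap_apply_of_ne_of_ne
        (Fin.ne_of_val_ne (by simp only [Fin.val_mk]; omega))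
        (Fin.ne_of_val_ne (by simp only [Fin.val_mk]; omega))
  · exact Commute.one_right _
  · exact Commute.one_left _
  · exact Commute.one_left _

lemma simpleT_sq {n i : ℕ} : simpleT n i * simpleT n i = 1 := by
  unfold simpleT
  split_ifs
  · exact Equiv.swap_mul_self _ _
  · exact one_mul 1

lemma simpleT_pow_even {n i m : ℕ} : (simpleT n i) ^ (2 * m) = 1 := by
  induction m with
  | zero => rfl
  | succ m ih =>
    rw [show 2 * (m + 1) = 2 * m + 2 by ring, pow_add, ih, one_mul, pow_two, simpleT_sq]

lemma prod_fix {n a : ℕ} : ∀ (l : List ℕ), (∀ i ∈ l, a + 2 ≤ i) →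
    ∀ p : Fin n, (p : ℕ) ≤ a → (l.map (simpleT n)).prod p = p := by
  intro l
  induction l with
  | nil => intro _ p _; rfl
  | cons i l ih =>
    intro h p hp
    simp only [List.map_cons, List.prod_cons, Equiv.Perm.mul_apply]
    rw [ih (fun j hj => h j (List.mem_cons_of_mem _ hj)) p hp]
    exact simpleT_fix p (by have := h i (List.mem_cons_self); omega)

lemma prod_extract {n a : ℕ} : ∀ (l : List ℕ), (∀ i ∈ l, i = a ∨ a + 2 ≤ i) →
    (l.map (simpleT n)).prod =
      (simpleT n a) ^ (l.count a) * ((l.filter (· ≠ a)).map (simpleT n)).prod := by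
  intro l
  induction l with
  | nil => simp
  | cons i l ih =>
    intro h
    have ihl := ih (fun j hj => h j (List.mem_cons_of_mem _ hj))
    rcases h i (List.mem_cons_self) with rfl | hi
    · rw [List.map_cons, List.prod_cons, ihl, List.count_cons_self,
        List.filter_cons_of_neg (by simp), pow_succ, ← mul_assoc]
      congr 1
      exact ((Commute.refl (simpleT n i)).pow_right _).eq
    · have hne : i ≠ a := by omega
      rw [List.map_cons, List.prod_cons, ihl,
        List.count_cons_of_ne (by omega), List.filter_cons_of_pos (by simpa using hne),
        List.map_cons, List.prod_cons]
      rw [← mul_assoc, ← mul_assoc]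
      congr 1
      exact (((simpleT_comm (n := n) hi).symm).pow_right _).eq

lemma struct_lemma {n : ℕ} {w w' : Equiv.Perm (Fin n)} {a : ℕ}
    (ha : a ∈ Supp n w) (hmin : ∀ b ∈ Supp n w, a ≤ b) (hna : a + 1 ∉ Supp n w)
    (hw : w = simpleT n a * w') :
    1 ≤ a ∧ a < n ∧ ∀ p : Fin n, (p : ℕ) ≤ a → w' p = p := by
  obtain ⟨l, hred, hal⟩ := ha
  have hSupp : ∀ i ∈ l, i ∈ Supp n w := fun i hi => ⟨l, hred, hi⟩
  have hbound : ∀ i ∈ l, 1 ≤ i ∧ i < n := hred.1.1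
  have hcases : ∀ i ∈ l, i = a ∨ a + 2 ≤ i := by
    intro i hi
    have h1 := hmin i (hSupp i hi)
    have h2 : i ≠ a + 1 := fun hc => hna (hc ▸ hSupp i hi)
    omega
  have ha1 : 1 ≤ a := (hbound a hal).1
  have ha2 : a < n := (hbound a hal).2
  set k := l.count a with hk
  have hkpos : 0 < k := List.count_pos_iff.mpr hal
  set l' := l.filter (· ≠ a) with hl'
  have hl'cases : ∀ i ∈ l', a + 2 ≤ i := by
    intro i hi
    rw [hl', List.mem_filter] at hi
    rcases hcases i hi.1 with rfl | h
    · simp at hi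
    · exact h
  have hwl : w = (simpleT n a) ^ k * (l'.map (simpleT n)).prod := by
    rw [← hred.1.2, prod_extract l hcases]
  rcases Nat.even_or_odd k with he | ho
  · exfalso
    obtain ⟨m, hm⟩ := he
    have hone : (simpleT n a) ^ k = 1 := by
      rw [hm, ← two_mul, simpleT_pow_even]
    have hword : IsWord n w l' :=
      ⟨fun i hi => hbound i (List.mem_of_mem_filter hi), by rw [hwl, hone, one_mul]⟩
    have hlt : l'.length < l.length :=
      List.length_filter_lt_length_iff_exists.mpr ⟨a, hal, by simp⟩
    have hle : coxLength n w ≤ l'.length := Nat.sInf_le ⟨l', hword, rfl⟩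
    have hlen := hred.2
    omega
  · obtain ⟨m, hm⟩ := ho
    have hpow : (simpleT n a) ^ k = simpleT n a := by
      rw [hm, pow_succ, simpleT_pow_even, one_mul]
    have hw'eq : w' = (l'.map (simpleT n)).prod := by
      apply mul_left_cancel (a := simpleT n a)
      rw [← hw, hwl, hpow]
    exact ⟨ha1, ha2, fun p hp => by rw [hw'eq]; exact prod_fix l' hl'cases p hp⟩
-- AUX2 END

theorem stmt12 (n : ℕ) (w w' : Equiv.Perm (Fin n)) (a : ℕ)
    (hb : BooleanPerm n w) (ha : a ∈ Supp n w) (hmin : ∀ b ∈ Supp n w, a ≤ b)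
    (hna : a + 1 ∉ Supp n w) (hw : w = simpleT n a * w') :
    {x : ℕ | x ∈ Row2 (Ptab (oneLine w))} =
      {x : ℕ | x ∈ Row2 (Ptab (oneLine w'))} ∪ {a + 1} := by
  obtain ⟨ha1, ha2, hfix⟩ := struct_lemma ha hmin hna hw
  have hsw : simpleT n a = Equiv.swap ⟨a - 1, by omega⟩ ⟨a, ha2⟩ := dif_pos ⟨ha1, ha2⟩
  have hwap : ∀ i : Fin n, w i = simpleT n a (w' i) := fun i => by rw [hw]; rfl
  have hhigh : ∀ i : Fin n, a + 1 ≤ (i : ℕ) → a + 1 ≤ ((w' i : Fin n) : ℕ) := by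
    intro i hi
    by_contra hc
    push_neg at hc
    have h1 : w' (w' i) = w' i := hfix _ (by omega)
    have h2 := w'.injective h1
    rw [h2] at hc
    omega
  have hswap_val : ∀ p : Fin n, ((simpleT n a p : Fin n) : ℕ)
      = if (p : ℕ) = a - 1 then a else if (p : ℕ) = a then a - 1 else p := by
    intro p
    rw [hsw, Equiv.swap_apply_def]
    rcases eq_or_ne (p : ℕ) (a - 1) with h1 | h1
    · rw [if_pos (Fin.ext h1 : p = ⟨a - 1, by omega⟩), if_pos h1]
    · rw [if_neg (fun hc => h1 (by rw [hc]))]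
      rcases eq_or_ne (p : ℕ) a with h2 | h2
      · rw [if_pos (Fin.ext h2 : p = ⟨a, ha2⟩), if_neg h1, if_pos h2]
      · rw [if_neg (fun hc => h2 (by rw [hc])), if_neg h1, if_neg h2]
  have hwval : ∀ (i : ℕ) (h : i < n), ((w ⟨i, h⟩ : Fin n) : ℕ)
      = if i < a - 1 then i else if i = a - 1 then a
        else if i = a then a - 1 else ((w' ⟨i, h⟩ : Fin n) : ℕ) := by
    intro i h
    by_cases hia : i ≤ a
    · rw [hwap, hfix ⟨i, h⟩ hia, hswap_val]
      simp only [Fin.val_mk]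
      split_ifs <;> omega
    · push_neg at hia
      have h1 := hhigh ⟨i, h⟩ (by simp only [Fin.val_mk]; omega)
      rw [hwap, hswap_val]
      rw [if_neg (by omega), if_neg (by omega), if_neg (by omega),
        if_neg (by omega), if_neg (by omega)]
  have hlen' : (oneLine w').length = n := by simp [oneLine]
  have htlen : ((oneLine w').drop (a + 1)).length = n - (a + 1) := by
    rw [List.length_drop, hlen']
  have honeget : ∀ (u : Equiv.Perm (Fin n)) (i : ℕ) (h1 : i < n),
      ∀ h2 : i < (oneLine u).length, (oneLine u)[i] = ((u ⟨i, h1⟩ : Fin n) : ℕ) + 1 := by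
    intro u i h1 h2
    simp [oneLine]
  have htget : ∀ (j : ℕ) (hj : j < ((oneLine w').drop (a + 1)).length),
      ((oneLine w').drop (a + 1))[j] = ((w' ⟨a + 1 + j, by omega⟩ : Fin n) : ℕ) + 1 := by
    intro j hj
    have hj' : a + 1 + j < n := by omega
    rw [List.getElem_drop]
    exact honeget w' (a + 1 + j) hj' _
  have hts : ∀ z ∈ (oneLine w').drop (a + 1), a + 2 ≤ z := by
    intro z hz
    obtain ⟨j, hj, hje⟩ := List.getElem_of_mem hz
    subst hje
    rw [htget j hj]
    have := hhigh ⟨a + 1 + j, by omega⟩ (by simp only [Fin.val_mk]; omega)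
    omega
  have hw'line : oneLine w' = List.range' 1 (a + 1) ++ (oneLine w').drop (a + 1) := by
    apply List.ext_getElem
    · simp only [hlen', List.length_append, List.length_range', htlen]
      omega
    · intro i hi1 hi2
      have hin : i < n := by rwa [hlen'] at hi1
      rw [honeget w' i hin hi1, List.getElem_append]
      split_ifs with hcase
      · simp only [List.length_range'] at hcase
        rw [List.getElem_range', hfix ⟨i, hin⟩ (by simp only [Fin.val_mk]; omega)]
        simp only [Fin.val_mk]
        omega
      · simp only [List.length_range'] at hcase ⊢
        rw [htget (i - (a + 1)) (by omega)]
        have he : a + 1 + (i - (a + 1)) = i := by omega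
        simp only [he]
  have hwline : oneLine w
      = (List.range' 1 (a - 1) ++ [a + 1, a]) ++ (oneLine w').drop (a + 1) := by
    apply List.ext_getElem
    · have e1 : (oneLine w).length = n := by simp [oneLine]
      simp only [e1, List.length_append, List.length_range', List.length_cons,
        List.length_nil, htlen]
      omega
    · intro i hi1 hi2
      have hin : i < n := by simpa [oneLine] using hi1
      rw [honeget w i hin hi1, List.getElem_append]
      split_ifs with hc0
      · simp only [List.length_append, List.length_range', List.length_cons,
          List.length_nil] at hc0
        rw [List.getElem_append]
        split_ifs with hc2
        · simp only [List.length_range'] at hc2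
          rw [List.getElem_range', hwval i hin, if_pos hc2]
          omega
        · simp only [List.length_range'] at hc2
          push_neg at hc2
          rcases (by omega : i = a - 1 ∨ i = a) with hi | hi
          · rw [hwval i hin, if_neg (by omega), if_pos hi]
            simp only [show i - (List.range' 1 (a - 1)).length = 0 by simp; omega,
              List.getElem_cons_zero]
          · rw [hwval i hin, if_neg (by omega), if_neg (by omega), if_pos hi]
            simp only [show i - (List.range' 1 (a - 1)).length = 1 by simp; omega,
              List.getElem_cons_succ, List.getElem_cons_zero]
            omega
      · simp only [List.length_append, List.length_range', List.length_cons,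
          List.length_nil] at hc0 ⊢
        push_neg at hc0
        rw [hwval i hin, if_neg (by omega), if_neg (by omega), if_neg (by omega)]
        rw [htget (i - (a - 1 + 2)) (by omega)]
        have he : a + 1 + (i - (a - 1 + 2)) = i := by omega
        simp only [he]
  have hPw' : Ptab (oneLine w')
      = List.foldl bumpInsert [List.range' 1 (a + 1)] ((oneLine w').drop (a + 1)) := by
    conv_lhs => rw [hw'line]
    rw [Ptab, List.foldl_append]
    rw [show List.foldl bumpInsert [] (List.range' 1 (a + 1)) = Ptab (List.range' 1 (a + 1))
      from rfl]
    rw [Ptab_sorted (List.pairwise_lt_range' (s := 1) (n := a + 1)) (by simp)]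
  have hPw : Ptab (oneLine w)
      = List.foldl bumpInsert [List.range' 1 a, [a + 1]] ((oneLine w').drop (a + 1)) := by
    conv_lhs => rw [hwline]
    rw [Ptab, List.foldl_append]
    rw [show List.foldl bumpInsert [] (List.range' 1 (a - 1) ++ [a + 1, a])
      = Ptab (List.range' 1 (a - 1) ++ [a + 1, a]) from rfl]
    rw [Ptab_w_prefix ha1]
  have hrel0 : Rel2 a [List.range' 1 a, [a + 1]] [List.range' 1 (a + 1)] :=
    ⟨[], [], by simp, by simp, by simp [cons2]⟩
  obtain ⟨s, rest, hs, hT', hT⟩ := Rel2_fold _ hts hrel0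
  have hrow : Row2 (Ptab (oneLine w)) = (a + 1) :: Row2 (Ptab (oneLine w')) := by
    rw [hPw, hPw', hT, hT']
    cases rest <;> simp [Row2, cons2]
  ext x
  simp only [Set.mem_setOf_eq, Set.mem_union, Set.mem_singleton_iff, hrow, List.mem_cons]
  tauto
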